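/- Let n ≥ 3, N ≥ n, ε > 0, and x ∈ Δ^N with x(1) ≤ ε. For every partition π of [n] containing a block of size at least 3, κ^N_n(x, π) ≤ κ^N_2(x, {{1,2}})·(Nε − 2)/(N − 2). -/

import Mathlib

open scoped Classical in
/-- Urn-without-replacement partition kernel. -/
noncomputable def urnKernel (N n : ℕ) (c : Fin N → ℕ) (P : Fin n → Fin n → Prop) : ℝ :=
  ((Finset.univ.filter fun f : Fin n ↪ Fin N =>
      ∀ i j, P i j ↔ c (f i) = c (f j)).card : ℝ) /
    (Fintype.card (Fin n ↪ Fin N) : ℝ)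

/-- For `x ∈ Δ^N` with all family sizes at most `εN` and a partition `π` of `[n]`
containing a block of size at least `3`,
`κ^N_n(x,π) ≤ κ^N_2(x,{{1,2}})·(Nε − 2)/(N − 2)`. -/
theorem stmt10 (N n : ℕ) (hn : 3 ≤ n) (hN : n ≤ N)
    (ε : ℝ) (hε : 0 < ε)
    (x : ℕ → ℝ)
    (hx0 : ∀ i, 0 ≤ x i) (hxa : Antitone x) (hxs : Summable x) (hx1 : ∑' i, x i = 1)
    (hxN : ∀ i, ∃ m : ℕ, (N : ℝ) * x i = m)
    (hxε : x 0 ≤ ε)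
    (c : Fin N → ℕ)
    (hc : ∀ ℓ, ((Finset.univ.filter fun a => c a = ℓ).card : ℝ) = (N : ℝ) * x ℓ)
    (P : Fin n → Fin n → Prop) (hP : Equivalence P)
    (hblock : ∃ i j k : Fin n, i ≠ j ∧ i ≠ k ∧ j ≠ k ∧ P i j ∧ P j k) :
    urnKernel N n c P ≤
      urnKernel N 2 c (fun _ _ => True) * (((N : ℝ) * ε - 2) / ((N : ℝ) - 2)) := by
  classical
  obtain ⟨i, j, k, hij, hik, hjk, hPij, hPjk⟩ := hblock
  have hN3 : 3 ≤ N := hn.trans hN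
  -- class-size bound
  have hclass : ∀ a : Fin N, ((Finset.univ.filter fun b => c b = c a).card : ℝ) ≤ (N : ℝ) * ε := by
    intro a
    rw [hc]
    exact mul_le_mul_of_nonneg_left ((hxa (Nat.zero_le _)).trans hxε) (by positivity)
  set Pair : Finset (Fin N × Fin N) :=
    Finset.univ.filter (fun p => p.1 ≠ p.2 ∧ c p.1 = c p.2) with hPairdef
  set Trip : Finset (Fin N × Fin N × Fin N) :=
    Finset.univ.filter (fun t => t.1 ≠ t.2.1 ∧ t.1 ≠ t.2.2 ∧ t.2.1 ≠ t.2.2 ∧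
      c t.1 = c t.2.1 ∧ c t.2.1 = c t.2.2) with hTripdef
  -- Step 1: triple bound
  have hTP : ((Trip.card : ℝ)) ≤ (Pair.card : ℝ) * ((N : ℝ) * ε - 2) := by
    have hmaps : ∀ t ∈ Trip, (t.1, t.2.1) ∈ Pair := by
      intro t ht
      simp only [hTripdef, hPairdef, Finset.mem_filter, Finset.mem_univ, true_and] at *
      exact ⟨ht.1, ht.2.2.2.1⟩
    rw [Finset.card_eq_sum_card_fiberwise hmaps]
    push_cast
    have hbound : ∀ p ∈ Pair,
        ((Trip.filter fun t => (t.1, t.2.1) = p).card : ℝ) ≤ (N : ℝ) * ε - 2 := by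
      intro p hp
      simp only [hPairdef, Finset.mem_filter, Finset.mem_univ, true_and] at hp
      obtain ⟨hp1, hp2⟩ := hp
      set C : Finset (Fin N) := Finset.univ.filter (fun b => c b = c p.1) with hCdef
      have hsub : ({p.1, p.2} : Finset (Fin N)) ⊆ C := by
        intro a ha
        simp only [Finset.mem_insert, Finset.mem_singleton] at ha
        rcases ha with rfl | rfl <;>
          simp [hCdef, hp2.symm]
      have hm2 : 2 ≤ C.card := by
        have := Finset.card_le_card hsub
        rwa [Finset.card_pair hp1] at this
      have hfib : (Trip.filter fun t => (t.1, t.2.1) = p).card ≤ C.card - 2 := by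
        have : (Trip.filter fun t => (t.1, t.2.1) = p).card ≤ (C \ {p.1, p.2}).card := by
          apply Finset.card_le_card_of_injOn (fun t => t.2.2)
          · intro t ht
            simp only [hTripdef, Finset.mem_coe, Finset.mem_filter, Finset.mem_univ, true_and] at ht
            obtain ⟨⟨h1, h2, h3, h4, h5⟩, h6⟩ := ht
            have e1 : t.1 = p.1 := congrArg Prod.fst h6
            have e2 : t.2.1 = p.2 := congrArg Prod.snd h6
            simp only [Finset.mem_coe, Finset.mem_sdiff, Finset.mem_insert, Finset.mem_singleton, hCdef,
              Finset.mem_filter, Finset.mem_univ, true_and]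
            refine ⟨by rw [← h5, ← h4, e1], ?_⟩
            push_neg
            exact ⟨by rw [← e1]; exact fun h => h2 h.symm, by rw [← e2]; exact fun h => h3 h.symm⟩
          · intro t ht t' ht' h
            simp only [Finset.mem_coe, Finset.mem_filter] at ht ht'
            have e1 : t.1 = p.1 := congrArg Prod.fst ht.2
            have e2 : t.2.1 = p.2 := congrArg Prod.snd ht.2
            have e1' : t'.1 = p.1 := congrArg Prod.fst ht'.2
            have e2' : t'.2.1 = p.2 := congrArg Prod.snd ht'.2
            exact Prod.ext (by rw [e1, e1']) (Prod.ext (by rw [e2, e2']) h)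
        rwa [Finset.card_sdiff_of_subset hsub, Finset.card_pair hp1] at this
      have hCle : (C.card : ℝ) ≤ (N : ℝ) * ε := hclass p.1
      calc ((Trip.filter fun t => (t.1, t.2.1) = p).card : ℝ)
          ≤ ((C.card - 2 : ℕ) : ℝ) := by exact_mod_cast hfib
        _ = (C.card : ℝ) - 2 := by
            rw [Nat.cast_sub hm2]; norm_num
        _ ≤ (N : ℝ) * ε - 2 := by linarith
    calc (∑ p ∈ Pair, ((Trip.filter fun t => (t.1, t.2.1) = p).card : ℝ))
        ≤ ∑ _p ∈ Pair, ((N : ℝ) * ε - 2) := Finset.sum_le_sum hbound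
      _ = (Pair.card : ℝ) * ((N : ℝ) * ε - 2) := by
          rw [Finset.sum_const, nsmul_eq_mul]
  -- Step 2: numerator bound for the n-kernel
  set F := (N - 3).descFactorial (n - 3) with hFdef
  set A := Finset.univ.filter fun f : Fin n ↪ Fin N =>
      ∀ a b, P a b ↔ c (f a) = c (f b) with hAdef
  have hAT : A.card ≤ F * Trip.card := by
    apply Finset.card_le_mul_card_image_of_maps_to (f := fun f : Fin n ↪ Fin N => (f i, f j, f k))
    · intro f hf
      simp only [hAdef, Finset.mem_filter, Finset.mem_univ, true_and] at hf
      simp only [hTripdef, Finset.mem_filter, Finset.mem_univ, true_and]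
      exact ⟨fun h => hij (f.injective h), fun h => hik (f.injective h),
        fun h => hjk (f.injective h), (hf i j).mp hPij, (hf j k).mp hPjk⟩
    · intro t ht
      simp only [hTripdef, Finset.mem_filter, Finset.mem_univ, true_and] at ht
      obtain ⟨ht1, ht2, ht3, _, _⟩ := ht
      set S : Finset (Fin n) := ({i, j, k} : Finset (Fin n))ᶜ with hSdef
      set T' : Finset (Fin N) := ({t.1, t.2.1, t.2.2} : Finset (Fin N))ᶜ with hTdef
      have hScard : Fintype.card ↥S = n - 3 := by
        rw [Fintype.card_coe, hSdef, Finset.card_compl, Fintype.card_fin]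
        congr 1
        rw [Finset.card_insert_of_notMem (by simp [hij, hik]),
          Finset.card_insert_of_notMem (by simp [hjk]), Finset.card_singleton]
      have hTcard : Fintype.card ↥T' = N - 3 := by
        rw [Fintype.card_coe, hTdef, Finset.card_compl, Fintype.card_fin]
        congr 1
        rw [Finset.card_insert_of_notMem (by simp [ht1, ht2]),
          Finset.card_insert_of_notMem (by simp [ht3]), Finset.card_singleton]
      set fib := A.filter (fun f : Fin n ↪ Fin N => (f i, f j, f k) = t) with hfibdef
      have key : fib.card ≤ Fintype.card (↥S ↪ ↥T') := by
        rw [← Fintype.card_coe fib]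
        have hmemS : ∀ (a : ↥S), (a : Fin n) ≠ i ∧ (a : Fin n) ≠ j ∧ (a : Fin n) ≠ k := by
          intro a
          have := a.2
          simp only [hSdef, Finset.mem_compl, Finset.mem_insert, Finset.mem_singleton] at this
          push_neg at this
          exact this
        have hval : ∀ (f : ↥fib), (f : Fin n ↪ Fin N) i = t.1 ∧
            (f : Fin n ↪ Fin N) j = t.2.1 ∧ (f : Fin n ↪ Fin N) k = t.2.2 := by
          intro f
          have := f.2
          simp only [hfibdef, Finset.mem_filter] at this
          have h := this.2
          exact ⟨congrArg (·.1) h, congrArg (·.2.1) h, congrArg (·.2.2) h⟩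
        have hmemT : ∀ (f : ↥fib) (a : ↥S), ((f : Fin n ↪ Fin N) a : Fin N) ∈ T' := by
          intro f a
          obtain ⟨ha1, ha2, ha3⟩ := hmemS a
          obtain ⟨hv1, hv2, hv3⟩ := hval f
          simp only [hTdef, Finset.mem_compl, Finset.mem_insert, Finset.mem_singleton]
          push_neg
          refine ⟨?_, ?_, ?_⟩
          · rw [← hv1]; exact fun h => ha1 ((f : Fin n ↪ Fin N).injective h)
          · rw [← hv2]; exact fun h => ha2 ((f : Fin n ↪ Fin N).injective h)
          · rw [← hv3]; exact fun h => ha3 ((f : Fin n ↪ Fin N).injective h)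
        let Φ : ↥fib → (↥S ↪ ↥T') := fun f =>
          ⟨fun a => ⟨(f : Fin n ↪ Fin N) a, hmemT f a⟩, by
            intro a b h
            have : ((f : Fin n ↪ Fin N) a : Fin N) = (f : Fin n ↪ Fin N) b :=
              congrArg Subtype.val h
            exact Subtype.ext ((f : Fin n ↪ Fin N).injective this)⟩
        apply Fintype.card_le_of_injective Φ
        intro f g h
        apply Subtype.ext
        apply DFunLike.ext
        intro a
        by_cases haS : a ∈ S
        · have := DFunLike.congr_fun h ⟨a, haS⟩
          exact congrArg Subtype.val this
        · simp only [hSdef, Finset.mem_compl, not_not] at haS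
          obtain ⟨hf1, hf2, hf3⟩ := hval f
          obtain ⟨hg1, hg2, hg3⟩ := hval g
          simp only [Finset.mem_insert, Finset.mem_singleton] at haS
          rcases haS with rfl | rfl | rfl
          · rw [hf1, hg1]
          · rw [hf2, hg2]
          · rw [hf3, hg3]
      calc fib.card ≤ Fintype.card (↥S ↪ ↥T') := key
        _ = F := by
            rw [Fintype.card_embedding_eq, hScard, hTcard]
  -- Step 4: descFactorial identities and final algebra
  have hdnat : N.descFactorial n = N * (N - 1) * (N - 2) * F := by
    obtain ⟨m, rfl⟩ : ∃ m, n = m + 3 := ⟨n - 3, by omega⟩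
    obtain ⟨M, rfl⟩ : ∃ M, N = M + 3 := ⟨N - 3, by omega⟩
    rw [hFdef]
    have e1 : M + 3 - 1 = M + 2 := by omega
    have e2 : M + 3 - 2 = M + 1 := by omega
    have e3 : M + 3 - 3 = M := by omega
    have e4 : m + 3 - 3 = m := by omega
    rw [e1, e2, e3, e4]
    rw [show M + 3 = (M + 2) + 1 from rfl, Nat.succ_descFactorial_succ,
      show M + 2 = (M + 1) + 1 from rfl, Nat.succ_descFactorial_succ,
      show M + 1 = M + 1 from rfl, Nat.succ_descFactorial_succ]
    ring
  have hd2nat : N.descFactorial 2 = N * (N - 1) := by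
    rw [Nat.descFactorial_succ, Nat.descFactorial_one]
    ring
  have hNR : (3 : ℝ) ≤ (N : ℝ) := by exact_mod_cast hN3
  have hFpos : 0 < F := by
    rw [hFdef]
    rcases Nat.eq_zero_or_pos ((N - 3).descFactorial (n - 3)) with h | h
    · exfalso
      rw [Nat.descFactorial_eq_zero_iff_lt] at h
      omega
    · exact h
  have hFR : (0 : ℝ) < (F : ℝ) := by exact_mod_cast hFpos
  have hKpos : (0 : ℝ) < (N : ℝ) * ((N : ℝ) - 1) * ((N : ℝ) - 2) := by
    have h1 : (0 : ℝ) < (N : ℝ) := by linarith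
    have h2 : (0 : ℝ) < (N : ℝ) - 1 := by linarith
    have h3 : (0 : ℝ) < (N : ℝ) - 2 := by linarith
    positivity
  have hdnR : ((N.descFactorial n : ℕ) : ℝ) =
      (N : ℝ) * ((N : ℝ) - 1) * ((N : ℝ) - 2) * (F : ℝ) := by
    rw [hdnat]
    push_cast [Nat.cast_sub (by omega : 1 ≤ N), Nat.cast_sub (by omega : 2 ≤ N)]
    ring
  have hd2R : ((N.descFactorial 2 : ℕ) : ℝ) = (N : ℝ) * ((N : ℝ) - 1) := by
    rw [hd2nat]
    push_cast [Nat.cast_sub (by omega : 1 ≤ N)]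
    ring
  have hLHS : urnKernel N n c P =
      (A.card : ℝ) / ((N : ℝ) * ((N : ℝ) - 1) * ((N : ℝ) - 2) * (F : ℝ)) := by
    rw [urnKernel, Fintype.card_embedding_eq, Fintype.card_fin, Fintype.card_fin, ← hdnR]
  have hRHS : urnKernel N 2 c (fun _ _ => True) =
      (Pair.card : ℝ) / ((N : ℝ) * ((N : ℝ) - 1)) := by
    rw [urnKernel, Fintype.card_embedding_eq, Fintype.card_fin, Fintype.card_fin, hd2R]
    congr 1
    norm_cast
    refine Finset.card_bij' (fun g _ => ((g 0 : Fin N), (g 1 : Fin N)))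
      (fun p hp => ⟨![p.1, p.2], by
        have hp' : p.1 ≠ p.2 := by
          rw [hPairdef] at hp
          exact (Finset.mem_filter.mp hp).2.1
        intro a b h
        fin_cases a <;> fin_cases b <;> simp_all⟩) ?_ ?_ ?_ ?_
    · intro g hg
      simp only [Finset.mem_filter, Finset.mem_univ, true_and] at hg
      rw [hPairdef]
      simp only [Finset.mem_filter, Finset.mem_univ, true_and]
      exact ⟨fun h => (by norm_num : ¬((0 : Fin 2) = 1)) (g.injective h), ((hg 0 1).mp trivial)⟩
    · intro p hp
      rw [hPairdef] at hp
      simp only [Finset.mem_filter, Finset.mem_univ, true_and] at hp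
      simp only [Finset.mem_filter, Finset.mem_univ, true_and]
      simp only [true_iff, Fin.forall_fin_two, Function.Embedding.coeFn_mk,
        Matrix.cons_val_zero, Matrix.cons_val_one, Matrix.head_cons]
      refine ⟨⟨trivial, hp.2⟩, hp.2.symm, trivial⟩
    · intro g hg
      apply DFunLike.ext
      intro a
      fin_cases a <;> simp <;> rfl
    · intro p hp
      rfl

  rw [hLHS, hRHS]
  have hATR : (A.card : ℝ) ≤ (F : ℝ) * (Trip.card : ℝ) := by exact_mod_cast hAT
  have step1 : (A.card : ℝ) / ((N : ℝ) * ((N : ℝ) - 1) * ((N : ℝ) - 2) * (F : ℝ)) ≤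
      (Trip.card : ℝ) / ((N : ℝ) * ((N : ℝ) - 1) * ((N : ℝ) - 2)) := by
    rw [div_le_div_iff₀ (by positivity) hKpos]
    calc (A.card : ℝ) * ((N : ℝ) * ((N : ℝ) - 1) * ((N : ℝ) - 2))
        ≤ ((F : ℝ) * (Trip.card : ℝ)) * ((N : ℝ) * ((N : ℝ) - 1) * ((N : ℝ) - 2)) :=
          mul_le_mul_of_nonneg_right hATR hKpos.le
      _ = (Trip.card : ℝ) * ((N : ℝ) * ((N : ℝ) - 1) * ((N : ℝ) - 2) * (F : ℝ)) := by ring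
  have step2 : (Trip.card : ℝ) / ((N : ℝ) * ((N : ℝ) - 1) * ((N : ℝ) - 2)) ≤
      ((Pair.card : ℝ) * ((N : ℝ) * ε - 2)) / ((N : ℝ) * ((N : ℝ) - 1) * ((N : ℝ) - 2)) :=
    by
      rw [div_le_div_iff₀ hKpos hKpos]
      exact mul_le_mul_of_nonneg_right hTP hKpos.le
  have hfinal : ((Pair.card : ℝ) * ((N : ℝ) * ε - 2)) /
      ((N : ℝ) * ((N : ℝ) - 1) * ((N : ℝ) - 2)) =
      (Pair.card : ℝ) / ((N : ℝ) * ((N : ℝ) - 1)) * (((N : ℝ) * ε - 2) / ((N : ℝ) - 2)) := by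
    rw [div_mul_div_comm]
  linarith
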